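/- For (w, V) define the worst-case interference power WIP(w, V) = sup over all (Δl_1, …, Δl_J) with Δl_jᴴ Δl_j ≤ υ_j² of Σ_{j=1}^{J} (l̂_j + Δl_j)ᴴ (w wᴴ + V)(l̂_j + Δl_j), and for (W̄, V̄, ξ) define WIP'(W̄, V̄) analogously with w wᴴ + V replaced by W̄ + V̄. Then the infimum over (w, V) ∈ F of the worst-case interference power leakage-to-transmit power ratio WIP(w, V)/(‖w‖² + Tr(V)) equals the infimum over (W̄, V̄, ξ) ∈ F' of WIP'(W̄, V̄); moreover, for every (w, V) ∈ F the point (ξ₀ w wᴴ, ξ₀ V, ξ₀) with ξ₀ = 1/(‖w‖² + Tr(V)) lies in F' and satisfies WIP(w, V)/(‖w‖² + Tr(V)) = WIP'(ξ₀ w wᴴ, ξ₀ V). -/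

import Mathlib

open Matrix
open scoped ComplexOrder

section IPTRAux
set_option linter.unusedSectionVars false
open Matrix
open scoped ComplexOrder

variable {n : Type*} [Fintype n] [DecidableEq n]

lemma quad_smul (c : ℝ) (M : Matrix n n ℂ) (x : n → ℂ) :
    (star x ⬝ᵥ ((c:ℂ) • M) *ᵥ x).re = c * (star x ⬝ᵥ M *ᵥ x).re := by
  rw [smul_mulVec, dotProduct_smul, smul_eq_mul, Complex.re_ofReal_mul]

lemma vecMulVec_mulVec' (w v x : n → ℂ) : vecMulVec w v *ᵥ x = (v ⬝ᵥ x) • w := by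
  funext i
  simp only [mulVec, dotProduct, vecMulVec_apply, Pi.smul_apply, smul_eq_mul, Finset.sum_mul,
    Finset.mul_sum]
  exact Finset.sum_congr rfl fun j _ => by ring

lemma star_dp (w x : n → ℂ) : star w ⬝ᵥ x = star (star x ⬝ᵥ w) := by
  simp [dotProduct, Finset.sum_comm, mul_comm]

lemma quad_vecMulVec (w x : n → ℂ) :
    (star x ⬝ᵥ vecMulVec w (star w) *ᵥ x).re = ‖star x ⬝ᵥ w‖ ^ 2 := by
  rw [vecMulVec_mulVec', dotProduct_smul, smul_eq_mul, star_dp]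
  rw [mul_comm, Complex.star_def, Complex.mul_conj, Complex.sq_norm, Complex.ofReal_re]

lemma trace_mul_vecMulVec (M : Matrix n n ℂ) (w : n → ℂ) :
    (M * vecMulVec w (star w)).trace = star w ⬝ᵥ M *ᵥ w := by
  simp only [trace, diag, Matrix.mul_apply, vecMulVec_apply, dotProduct, mulVec, Finset.mul_sum,
    Pi.star_apply]
  exact Finset.sum_congr rfl fun i _ => Finset.sum_congr rfl fun k _ => by ring

lemma trace_vecMulVec' (w : n → ℂ) : (vecMulVec w (star w)).trace = star w ⬝ᵥ w := by
  simp only [trace, diag, vecMulVec_apply, dotProduct, Pi.star_apply]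
  exact Finset.sum_congr rfl fun i _ => by ring

lemma posSemidef_vecMulVec' (w : n → ℂ) : (vecMulVec w (star w)).PosSemidef := by
  constructor
  · ext i j
    simp [conjTranspose_apply, vecMulVec_apply, mul_comm]
  · intro x
    exact (posSemidef_vecMulVec_self_star w).2 x

lemma posSemidef_smul' {M : Matrix n n ℂ} (hM : M.PosSemidef) {c : ℝ} (hc : 0 ≤ c) :
    ((c:ℂ) • M).PosSemidef := by
  constructor
  · exact by
      have := hM.1
      rw [IsHermitian] at this ⊢
      rw [conjTranspose_smul, this, Complex.star_def, Complex.conj_ofReal]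
  · intro x
    exact (hM.smul (a := (c:ℂ)) (Complex.zero_le_real.mpr hc)).2 x

lemma trace_re_nonneg' {M : Matrix n n ℂ} (hM : M.PosSemidef) : 0 ≤ M.trace.re := by
  have : ∀ i, 0 ≤ (M i i).re := by
    intro i
    have h := hM.re_dotProduct_nonneg (Pi.single i 1)
    simpa [dotProduct, mulVec, Pi.single_apply, Finset.sum_ite_eq] using h
  rw [trace]
  rw [Complex.re_sum]  -- guess
  exact Finset.sum_nonneg fun i _ => this i

lemma rank_vecMulVec_self {w : n → ℂ} (hw : w ≠ 0) : (vecMulVec w (star w)).rank = 1 := by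
  have hdp : star w ⬝ᵥ w ≠ 0 := fun h => hw (dotProduct_star_self_eq_zero.mp h)
  have hrange : LinearMap.range (vecMulVec w (star w)).mulVecLin = Submodule.span ℂ {w} := by
    apply le_antisymm
    · rintro y ⟨x, rfl⟩
      rw [mulVecLin_apply, vecMulVec_mulVec']
      exact Submodule.smul_mem _ _ (Submodule.mem_span_singleton_self w)
    · rw [Submodule.span_singleton_le_iff_mem]
      refine ⟨(star w ⬝ᵥ w)⁻¹ • w, ?_⟩
      rw [mulVecLin_apply, mulVec_smul, vecMulVec_mulVec', smul_smul, inv_mul_cancel₀ hdp,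
        one_smul]
  rw [Matrix.rank, hrange, finrank_span_singleton hw]

lemma rank_smul_eq {c : ℂ} (hc : c ≠ 0) (M : Matrix n n ℂ) : (c • M).rank = M.rank := by
  have h1 : c • M = M * (c • (1 : Matrix n n ℂ)) := by
    rw [Matrix.mul_smul, mul_one]
  rw [h1, rank_mul_eq_left_of_isUnit_det]
  rw [det_smul, det_one, mul_one]
  exact (hc.isUnit).pow _

lemma exists_vecMulVec_of_rank_one {M : Matrix n n ℂ} (hM : M.PosSemidef) (hr : M.rank = 1) :
    ∃ u : n → ℂ, u ≠ 0 ∧ M = vecMulVec u (star u) := by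
  have hH := hM.1
  have hcard : Fintype.card {i // hH.eigenvalues i ≠ 0} = 1 := by
    rw [← hH.rank_eq_card_non_zero_eigs, hr]
  obtain ⟨⟨i0, hi0⟩, huniq⟩ := Fintype.card_eq_one_iff.mp hcard
  have hzero : ∀ j, j ≠ i0 → hH.eigenvalues j = 0 := by
    intro j hj
    by_contra hjz
    exact hj (congrArg Subtype.val (huniq ⟨j, hjz⟩))
  have hpos : 0 < hH.eigenvalues i0 := lt_of_le_of_ne (hM.eigenvalues_nonneg i0) (Ne.symm hi0)
  set s : ℝ := Real.sqrt (hH.eigenvalues i0) with hs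
  have hs2 : s * s = hH.eigenvalues i0 := Real.mul_self_sqrt hpos.le
  refine ⟨(s : ℂ) • fun i => hH.eigenvectorBasis i0 i, ?_, ?_⟩
  · intro h0
    have := congrFun h0
    have hne := hH.eigenvectorBasis.orthonormal.ne_zero i0
    apply hne
    have hsne : (s : ℂ) ≠ 0 := by
      simp only [ne_eq, Complex.ofReal_eq_zero]
      positivity
    apply PiLp.ext
    intro i
    have := congrFun h0 i
    simp only [Pi.smul_apply, smul_eq_mul, Pi.zero_apply] at this
    have := (mul_eq_zero.mp this).resolve_left hsne
    simpa using this
  · ext i j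
    conv_lhs => rw [hH.spectral_theorem, Unitary.conjStarAlgAut_apply]
    rw [Matrix.mul_apply]
    simp only [Matrix.mul_diagonal, conjTranspose_apply, vecMulVec_apply, Pi.star_apply,
      Pi.smul_apply, smul_eq_mul]
    rw [Finset.sum_eq_single i0]
    · have h1 : (↑hH.eigenvectorUnitary : Matrix n n ℂ) i i0 = hH.eigenvectorBasis i0 i := rfl
      have h2 : star (↑hH.eigenvectorUnitary : Matrix n n ℂ) i0 j
          = starRingEnd ℂ (hH.eigenvectorBasis i0 j) := by
        simp [Matrix.star_apply, RCLike.star_def]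
      rw [h1, h2]
      have h3 : ((hH.eigenvalues i0 : ℝ) : ℂ) = (s : ℂ) * (s : ℂ) := by
        rw [← hs2]; push_cast; ring
      simp only [Function.comp_apply, star_mul', Complex.star_def, Complex.conj_ofReal]
      rw [← hs2]
      simp only [RCLike.ofReal_mul, Complex.ofReal_mul, Complex.coe_algebraMap,
        RCLike.ofReal_alg, smul_eq_mul]
      ring_nf
      simp only [Complex.real_smul, mul_one, Complex.ofReal_pow]
      ring
    · intro b _ hb
      simp [Function.comp_apply, hzero b hb]
    · intro h; exact absurd (Finset.mem_univ i0) h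

lemma vecMulVec_real_smul (c : ℝ) (w : n → ℂ) :
    vecMulVec ((c:ℂ) • w) (star ((c:ℂ) • w)) = (((c * c : ℝ)):ℂ) • vecMulVec w (star w) := by
  ext i j
  simp only [vecMulVec_apply, Pi.smul_apply, Pi.star_apply, smul_eq_mul, Matrix.smul_apply,
    star_mul', Complex.star_def, Complex.conj_ofReal]
  push_cast
  ring

lemma trace_real_smul_re (c : ℝ) (M : Matrix n n ℂ) :
    (((c:ℂ) • M).trace).re = c * M.trace.re := by
  rw [trace_smul, smul_eq_mul, Complex.re_ofReal_mul]

lemma trace_mul_real_smul_re (c : ℝ) (A M : Matrix n n ℂ) :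
    ((A * ((c:ℂ) • M)).trace).re = c * (A * M).trace.re := by
  rw [mul_smul_comm, trace_smul, smul_eq_mul, Complex.re_ofReal_mul]


end IPTRAux

/-- The original feasible set `F`: pairs `(w, V)` with `V` Hermitian PSD satisfying the
SINR constraint C1 of the desired receiver, the robust eavesdropper constraints C2 and C3,
and the power constraint C4. -/
def FeasOrig {NT K J : ℕ} (h : Fin NT → ℂ)
    (ghat : Fin (K - 1) → Fin NT → ℂ) (lhat : Fin J → Fin NT → ℂ)
    (Γreq σz2 Pmax σPU2 : ℝ) (Γtol σzk2 ε : Fin (K - 1) → ℝ) (ΓtolPU υ : Fin J → ℝ)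
    (w : Fin NT → ℂ) (V : Matrix (Fin NT) (Fin NT) ℂ) : Prop :=
  V.PosSemidef ∧
  Γreq * ((Matrix.vecMulVec h (star h) * V).trace.re + σz2) ≤
      (star w ⬝ᵥ Matrix.vecMulVec h (star h) *ᵥ w).re ∧
  (∀ k, ∀ Δg : Fin NT → ℂ, (star Δg ⬝ᵥ Δg).re ≤ ε k ^ 2 →
      ‖star (ghat k + Δg) ⬝ᵥ w‖ ^ 2 ≤
        Γtol k * ((star (ghat k + Δg) ⬝ᵥ V *ᵥ (ghat k + Δg)).re + σzk2 k)) ∧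
  (∀ j, ∀ Δl : Fin NT → ℂ, (star Δl ⬝ᵥ Δl).re ≤ υ j ^ 2 →
      ‖star (lhat j + Δl) ⬝ᵥ w‖ ^ 2 ≤
        ΓtolPU j * ((star (lhat j + Δl) ⬝ᵥ V *ᵥ (lhat j + Δl)).re + σPU2)) ∧
  (star w ⬝ᵥ w).re + V.trace.re ≤ Pmax

/-- The Charnes–Cooper transformed feasible set `F'`: triples `(W̄, V̄, ξ)` with `W̄, V̄`
Hermitian PSD, `ξ ≥ 0`, `rank W̄ = 1`, the transformed constraints, the transformed power
constraint, and the normalization `Tr(W̄) + Tr(V̄) = 1`. -/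
def FeasTrans {NT K J : ℕ} (h : Fin NT → ℂ)
    (ghat : Fin (K - 1) → Fin NT → ℂ) (lhat : Fin J → Fin NT → ℂ)
    (Γreq σz2 Pmax σPU2 : ℝ) (Γtol σzk2 ε : Fin (K - 1) → ℝ) (ΓtolPU υ : Fin J → ℝ)
    (Wb Vb : Matrix (Fin NT) (Fin NT) ℂ) (ξ : ℝ) : Prop :=
  Wb.PosSemidef ∧ Vb.PosSemidef ∧ 0 ≤ ξ ∧ Wb.rank = 1 ∧
  Γreq * ((Matrix.vecMulVec h (star h) * Vb).trace.re + σz2 * ξ) ≤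
      (Matrix.vecMulVec h (star h) * Wb).trace.re ∧
  (∀ k, ∀ Δg : Fin NT → ℂ, (star Δg ⬝ᵥ Δg).re ≤ ε k ^ 2 →
      (star (ghat k + Δg) ⬝ᵥ Wb *ᵥ (ghat k + Δg)).re ≤
        Γtol k * ((star (ghat k + Δg) ⬝ᵥ Vb *ᵥ (ghat k + Δg)).re + σzk2 k * ξ)) ∧
  (∀ j, ∀ Δl : Fin NT → ℂ, (star Δl ⬝ᵥ Δl).re ≤ υ j ^ 2 →
      (star (lhat j + Δl) ⬝ᵥ Wb *ᵥ (lhat j + Δl)).re ≤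
        ΓtolPU j * ((star (lhat j + Δl) ⬝ᵥ Vb *ᵥ (lhat j + Δl)).re + σPU2 * ξ)) ∧
  Wb.trace.re + Vb.trace.re ≤ Pmax * ξ ∧
  Wb.trace.re + Vb.trace.re = 1

/-- The worst-case total interference power leaked by the matrix `M` (here `M = w wᴴ + V`
or `M = W̄ + V̄`) over all admissible channel uncertainties. -/
noncomputable def WIP {NT J : ℕ} (lhat : Fin J → Fin NT → ℂ)
    (υ : Fin J → ℝ) (M : Matrix (Fin NT) (Fin NT) ℂ) : ℝ :=
  sSup {t : ℝ | ∃ Δl : Fin J → Fin NT → ℂ,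
    (∀ j, (star (Δl j) ⬝ᵥ Δl j).re ≤ υ j ^ 2) ∧
    t = ∑ j, (star (lhat j + Δl j) ⬝ᵥ M *ᵥ (lhat j + Δl j)).re}


lemma WIP_real_smul {NT J : ℕ} (lhat : Fin J → Fin NT → ℂ) (υ : Fin J → ℝ)
    (M : Matrix (Fin NT) (Fin NT) ℂ) {c : ℝ} (hc : 0 ≤ c) :
    WIP lhat υ ((c:ℂ) • M) = c * WIP lhat υ M := by
  rw [WIP, WIP, ← smul_eq_mul, ← Real.sSup_smul_of_nonneg hc]
  congr 1
  ext t
  simp only [Set.mem_smul_set, Set.mem_setOf_eq, smul_eq_mul]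
  constructor
  · rintro ⟨Δl, hΔ, rfl⟩
    exact ⟨_, ⟨Δl, hΔ, rfl⟩, by
      rw [Finset.mul_sum]; exact (Finset.sum_congr rfl fun j _ => (quad_smul c M _)).symm⟩
  · rintro ⟨t', ⟨Δl, hΔ, rfl⟩, rfl⟩
    exact ⟨Δl, hΔ, by
      rw [Finset.mul_sum]; exact (Finset.sum_congr rfl fun j _ => (quad_smul c M _)).symm⟩

/-- Equivalence of the worst-case interference power leakage-to-transmit power ratio
minimization problem and its Charnes–Cooper transformed version: the optimal values
coincide, and every feasible `(w, V)` yields a feasible transformed point with the same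
objective value. -/
theorem iptr_min_equiv {NT K J : ℕ} (hNT : 1 ≤ NT) (h : Fin NT → ℂ)
    (ghat : Fin (K - 1) → Fin NT → ℂ) (lhat : Fin J → Fin NT → ℂ)
    (Γreq σz2 Pmax σPU2 : ℝ) (Γtol σzk2 ε : Fin (K - 1) → ℝ) (ΓtolPU υ : Fin J → ℝ)
    (hΓreq : 0 < Γreq) (hσz : 0 < σz2) (hPmax : 0 < Pmax) (hσPU : 0 < σPU2)
    (hΓtol : ∀ k, 0 < Γtol k) (hσzk : ∀ k, 0 < σzk2 k) (hε : ∀ k, 0 < ε k)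
    (hΓPU : ∀ j, 0 < ΓtolPU j) (hυ : ∀ j, 0 < υ j) :
    (sInf {t : ℝ | ∃ w V, FeasOrig h ghat lhat Γreq σz2 Pmax σPU2 Γtol σzk2 ε ΓtolPU υ w V ∧
          t = WIP lhat υ (Matrix.vecMulVec w (star w) + V) /
              ((star w ⬝ᵥ w).re + V.trace.re)} =
      sInf {t : ℝ | ∃ Wb Vb ξ,
          FeasTrans h ghat lhat Γreq σz2 Pmax σPU2 Γtol σzk2 ε ΓtolPU υ Wb Vb ξ ∧
          t = WIP lhat υ (Wb + Vb)}) ∧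
    (∀ w V, FeasOrig h ghat lhat Γreq σz2 Pmax σPU2 Γtol σzk2 ε ΓtolPU υ w V →
        FeasTrans h ghat lhat Γreq σz2 Pmax σPU2 Γtol σzk2 ε ΓtolPU υ
          ((((star w ⬝ᵥ w).re + V.trace.re)⁻¹ : ℂ) • Matrix.vecMulVec w (star w))
          ((((star w ⬝ᵥ w).re + V.trace.re)⁻¹ : ℂ) • V)
          (((star w ⬝ᵥ w).re + V.trace.re)⁻¹) ∧
        WIP lhat υ (Matrix.vecMulVec w (star w) + V) /
            ((star w ⬝ᵥ w).re + V.trace.re) =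
          WIP lhat υ
            ((((star w ⬝ᵥ w).re + V.trace.re)⁻¹ : ℂ) • Matrix.vecMulVec w (star w) +
              (((star w ⬝ᵥ w).re + V.trace.re)⁻¹ : ℂ) • V)) := by
  classical
  have key : ∀ (w : Fin NT → ℂ) (V : Matrix (Fin NT) (Fin NT) ℂ),
      FeasOrig h ghat lhat Γreq σz2 Pmax σPU2 Γtol σzk2 ε ΓtolPU υ w V →
      FeasTrans h ghat lhat Γreq σz2 Pmax σPU2 Γtol σzk2 ε ΓtolPU υ
          ((((star w ⬝ᵥ w).re + V.trace.re)⁻¹ : ℂ) • Matrix.vecMulVec w (star w))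
          ((((star w ⬝ᵥ w).re + V.trace.re)⁻¹ : ℂ) • V)
          (((star w ⬝ᵥ w).re + V.trace.re)⁻¹) ∧
        WIP lhat υ (Matrix.vecMulVec w (star w) + V) /
            ((star w ⬝ᵥ w).re + V.trace.re) =
          WIP lhat υ
            ((((star w ⬝ᵥ w).re + V.trace.re)⁻¹ : ℂ) • Matrix.vecMulVec w (star w) +
              (((star w ⬝ᵥ w).re + V.trace.re)⁻¹ : ℂ) • V) := by
    intro w V hF
    obtain ⟨hV, hC1, hC2, hC3, hC4⟩ := hF
    have htrHV : 0 ≤ (Matrix.vecMulVec h (star h) * V).trace.re := by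
      rw [trace_mul_comm, trace_mul_vecMulVec]
      exact hV.re_dotProduct_nonneg h
    have hw0 : w ≠ 0 := by
      intro hw
      rw [hw] at hC1
      simp only [star_zero, mulVec_zero, dotProduct_zero, Complex.zero_re] at hC1
      nlinarith [htrHV, hΓreq, hσz]
    have hwpos : 0 < (star w ⬝ᵥ w).re := by
      have h1 : star w ⬝ᵥ w ≠ 0 := fun hh => hw0 (dotProduct_star_self_eq_zero.mp hh)
      have h2 := Complex.le_def.mp (dotProduct_star_self_nonneg w)
      have hre : 0 ≤ (star w ⬝ᵥ w).re := by simpa using h2.1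
      have him : (star w ⬝ᵥ w).im = 0 := by simpa using h2.2.symm
      refine lt_of_le_of_ne hre fun hzz => h1 ?_
      exact Complex.ext (by simp [← hzz]) (by simp [him])
    set d : ℝ := (star w ⬝ᵥ w).re + V.trace.re with hd
    have hdpos : 0 < d := by have := trace_re_nonneg' hV; rw [hd]; linarith
    have hdinv0 : (0:ℝ) ≤ d⁻¹ := inv_nonneg.mpr hdpos.le
    have hcast : ((((star w ⬝ᵥ w).re : ℝ) : ℂ) + ((V.trace.re : ℝ) : ℂ))⁻¹ = ((d⁻¹ : ℝ) : ℂ) := by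
      rw [← Complex.ofReal_add, ← Complex.ofReal_inv, ← hd]
    have hξξ : d⁻¹ * d = 1 := inv_mul_cancel₀ hdpos.ne'
    constructor
    · rw [hcast]
      refine ⟨posSemidef_smul' (posSemidef_vecMulVec' w) hdinv0, posSemidef_smul' hV hdinv0,
        hdinv0, ?_, ?_, ?_, ?_, ?_, ?_⟩
      · rw [rank_smul_eq (Complex.ofReal_ne_zero.mpr (inv_ne_zero hdpos.ne')),
          rank_vecMulVec_self hw0]
      · rw [trace_mul_real_smul_re, trace_mul_real_smul_re, trace_mul_vecMulVec]
        linarith [mul_le_mul_of_nonneg_left hC1 hdinv0]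
      · intro k Δg hΔg
        rw [quad_smul, quad_smul, quad_vecMulVec]
        linarith [mul_le_mul_of_nonneg_left (hC2 k Δg hΔg) hdinv0]
      · intro j Δl hΔl
        rw [quad_smul, quad_smul, quad_vecMulVec]
        linarith [mul_le_mul_of_nonneg_left (hC3 j Δl hΔl) hdinv0]
      · rw [trace_real_smul_re, trace_real_smul_re, trace_vecMulVec']
        have h6 : d⁻¹ * (star w ⬝ᵥ w).re + d⁻¹ * V.trace.re = 1 := by
          rw [← mul_add, ← hd, hξξ]
        rw [h6]
        linarith [mul_le_mul_of_nonneg_right hC4 hdinv0, mul_inv_cancel₀ hdpos.ne']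
      · rw [trace_real_smul_re, trace_real_smul_re, trace_vecMulVec']
        rw [← mul_add, ← hd, hξξ]
    · rw [hcast, ← smul_add, WIP_real_smul lhat υ _ hdinv0, div_eq_mul_inv, mul_comm]
  refine ⟨?_, fun w V hF => key w V hF⟩
  have hsets : {t : ℝ | ∃ w V, FeasOrig h ghat lhat Γreq σz2 Pmax σPU2 Γtol σzk2 ε ΓtolPU υ w V ∧
          t = WIP lhat υ (Matrix.vecMulVec w (star w) + V) /
              ((star w ⬝ᵥ w).re + V.trace.re)} =
      {t : ℝ | ∃ Wb Vb ξ,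
          FeasTrans h ghat lhat Γreq σz2 Pmax σPU2 Γtol σzk2 ε ΓtolPU υ Wb Vb ξ ∧
          t = WIP lhat υ (Wb + Vb)} := by
    ext t
    simp only [Set.mem_setOf_eq]
    constructor
    · rintro ⟨w, V, hF, rfl⟩
      exact ⟨_, _, _, (key w V hF).1, (key w V hF).2⟩
    · rintro ⟨Wb, Vb, ξ, hF, rfl⟩
      obtain ⟨hW, hVb, hξ0, hrank, hC1, hC2, hC3, hpow, hnorm⟩ := hF
      have hξpos : 0 < ξ := by nlinarith
      obtain ⟨u, hu0, hWu⟩ := exists_vecMulVec_of_rank_one hW hrank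
      have hcinv0 : (0:ℝ) ≤ ξ⁻¹ := inv_nonneg.mpr hξpos.le
      have hξξ : ξ⁻¹ * ξ = 1 := inv_mul_cancel₀ hξpos.ne'
      set s : ℝ := Real.sqrt ξ⁻¹ with hs
      have hs2 : s * s = ξ⁻¹ := Real.mul_self_sqrt hcinv0
      set ws : Fin NT → ℂ := (s:ℂ) • u with hws
      have hww : Matrix.vecMulVec ws (star ws) = ((ξ⁻¹:ℝ):ℂ) • Wb := by
        rw [hws, vecMulVec_real_smul, hs2, hWu]
      have hwq : (star ws ⬝ᵥ ws).re = ξ⁻¹ * Wb.trace.re := by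
        have e := trace_vecMulVec' ws
        rw [hww] at e
        rw [← e, trace_real_smul_re]
      refine ⟨ws, ((ξ⁻¹:ℝ):ℂ) • Vb, ⟨posSemidef_smul' hVb hcinv0, ?_, ?_, ?_, ?_⟩, ?_⟩
      · have hrhs : (star ws ⬝ᵥ Matrix.vecMulVec h (star h) *ᵥ ws).re =
            ξ⁻¹ * (Matrix.vecMulVec h (star h) * Wb).trace.re := by
          rw [← trace_mul_vecMulVec, hww, trace_mul_real_smul_re]
        rw [hrhs, trace_mul_real_smul_re]
        have hkey := mul_le_mul_of_nonneg_left hC1 hcinv0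
        nlinarith [hkey, hξξ, mul_pos hΓreq hσz]
      · intro k Δg hΔg
        have hlhs : ‖star (ghat k + Δg) ⬝ᵥ ws‖ ^ 2 =
            ξ⁻¹ * (star (ghat k + Δg) ⬝ᵥ Wb *ᵥ (ghat k + Δg)).re := by
          rw [← quad_vecMulVec, hww, quad_smul]
        rw [hlhs, quad_smul]
        have hkey := mul_le_mul_of_nonneg_left (hC2 k Δg hΔg) hcinv0
        nlinarith [hkey, hξξ, mul_pos (hΓtol k) (hσzk k)]
      · intro j Δl hΔl
        have hlhs : ‖star (lhat j + Δl) ⬝ᵥ ws‖ ^ 2 =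
            ξ⁻¹ * (star (lhat j + Δl) ⬝ᵥ Wb *ᵥ (lhat j + Δl)).re := by
          rw [← quad_vecMulVec, hww, quad_smul]
        rw [hlhs, quad_smul]
        have hkey := mul_le_mul_of_nonneg_left (hC3 j Δl hΔl) hcinv0
        nlinarith [hkey, hξξ, mul_pos (hΓPU j) hσPU]
      · rw [hwq, trace_real_smul_re]
        nlinarith [hnorm, hpow, hξξ, hcinv0, hPmax, hξpos]
      · rw [hwq, trace_real_smul_re, hww, ← smul_add, WIP_real_smul lhat υ _ hcinv0,
          ← mul_add, hnorm, mul_one]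
        rw [mul_comm, mul_div_assoc, div_self (inv_ne_zero hξpos.ne'), mul_one]
  rw [hsets]
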